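/- arXiv:2512.23770 — 3 statements merged into one kernel-verified Lean document; each statement's English description precedes it below -/
import Mathlib

section
/- Let θ, δ_r, δ_c ∈ ℝ^d with ‖δ_r‖ ≤ M and ‖δ_c‖ ≤ M, let J_c : ℝ^d → ℝ be differentiable with gradient g_c := ∇J_c(θ) at θ and with ∇J_c L-Lipschitz on the closed ball of radius M centred at θ, and let β ∈ (0,1]. Assume ⟨g_c, δ_c⟩ ≤ 0 and ⟨g_c, δ_c⟩ ≤ ⟨g_c, δ_r⟩, set ε := −β·⟨g_c, δ_c⟩ and δ := (1−μ*)·δ_r + μ*·δ_c. Then for every α ∈ [0,1]: J_c(θ + α·δ) ≤ J_c(θ) + α·β·⟨g_c, δ_c⟩ + (L·α²/2)·‖δ‖². -/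
open RealInnerProductSpace

/-- Descent lemma: if the gradient is `L`-Lipschitz on the closed ball of radius `M`
around `θ` and `‖v‖ ≤ M`, then `Jc (θ + v) ≤ Jc θ + ⟪∇Jc θ, v⟫ + L/2 ‖v‖²`. -/
lemma descent_aux {d : ℕ} (θ : EuclideanSpace ℝ (Fin d)) (M L : ℝ) (hL : 0 < L) (hM : 0 ≤ M)
    (Jc : EuclideanSpace ℝ (Fin d) → ℝ) (hJc : Differentiable ℝ Jc)
    (hLip : LipschitzOnWith (Real.toNNReal L) (gradient Jc) (Metric.closedBall θ M))
    (v : EuclideanSpace ℝ (Fin d)) (hv : ‖v‖ ≤ M) :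
    Jc (θ + v) ≤ Jc θ + ⟪gradient Jc θ, v⟫ + L / 2 * ‖v‖ ^ 2 := by
  set φ : ℝ → ℝ := fun t => Jc (θ + t • v) - t * ⟪gradient Jc θ, v⟫ - L * t ^ 2 / 2 * ‖v‖ ^ 2 with hφ
  have hderiv : ∀ t : ℝ, HasDerivAt φ
      (⟪gradient Jc (θ + t • v), v⟫ - ⟪gradient Jc θ, v⟫ - L * t * ‖v‖ ^ 2) t := by
    intro t
    have h1 : HasDerivAt (fun s : ℝ => θ + s • v) v t := by
      simpa using ((hasDerivAt_id t).smul_const v).const_add θ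
    have h2 : HasDerivAt (fun s : ℝ => Jc (θ + s • v)) ⟪gradient Jc (θ + t • v), v⟫ t := by
      exact (((hJc (θ + t • v)).hasGradientAt.hasFDerivAt).comp_hasDerivAt t h1).congr_deriv rfl
    have h3 : HasDerivAt (fun s : ℝ => s * ⟪gradient Jc θ, v⟫) ⟪gradient Jc θ, v⟫ t := by
      simpa using (hasDerivAt_id t).mul_const _
    have h4 : HasDerivAt (fun s : ℝ => L * s ^ 2 / 2 * ‖v‖ ^ 2) (L * t * ‖v‖ ^ 2) t := by
      have : HasDerivAt (fun s : ℝ => s ^ 2) (2 * t) t := by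
        simpa using hasDerivAt_pow 2 t
      have := ((this.const_mul L).div_const 2).mul_const (‖v‖ ^ 2)
      exact this.congr_deriv (by ring)
    exact (h2.sub h3).sub h4
  have hmem : ∀ t ∈ Set.Icc (0:ℝ) 1, θ + t • v ∈ Metric.closedBall θ M := by
    intro t ht
    simp only [Metric.mem_closedBall, dist_eq_norm]
    have h : ‖θ + t • v - θ‖ = |t| * ‖v‖ := by
      rw [add_sub_cancel_left, norm_smul, Real.norm_eq_abs]
    rw [h, abs_of_nonneg ht.1]
    calc t * ‖v‖ ≤ 1 * ‖v‖ := mul_le_mul_of_nonneg_right ht.2 (norm_nonneg v)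
      _ ≤ M := by simpa using hv
  have hanti : AntitoneOn φ (Set.Icc (0:ℝ) 1) := by
    apply antitoneOn_of_deriv_nonpos (convex_Icc 0 1)
    · exact fun t _ => ((hderiv t).continuousAt).continuousWithinAt
    · exact fun t _ => (hderiv t).differentiableAt.differentiableWithinAt
    · intro t ht
      rw [interior_Icc] at ht
      rw [(hderiv t).deriv]
      have hmem' := hmem t (Set.mem_Icc_of_Ioo ht)
      have hθ : θ ∈ Metric.closedBall θ M := by simp [hM]
      have hdist := hLip.dist_le_mul (θ + t • v) hmem' θ hθ
      have hd : dist (θ + t • v) θ = t * ‖v‖ := by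
        rw [dist_eq_norm, add_sub_cancel_left, norm_smul, Real.norm_eq_abs,
          abs_of_nonneg ht.1.le]
      rw [hd, Real.coe_toNNReal L hL.le] at hdist
      have hb : ⟪gradient Jc (θ + t • v) - gradient Jc θ, v⟫ ≤ L * t * ‖v‖ ^ 2 := by
        calc ⟪gradient Jc (θ + t • v) - gradient Jc θ, v⟫
            ≤ ‖gradient Jc (θ + t • v) - gradient Jc θ‖ * ‖v‖ := real_inner_le_norm _ _
          _ ≤ (L * (t * ‖v‖)) * ‖v‖ := by
              apply mul_le_mul_of_nonneg_right _ (norm_nonneg v)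
              rwa [← dist_eq_norm]
          _ = L * t * ‖v‖ ^ 2 := by ring
      rw [inner_sub_left] at hb
      linarith
  have h01 := hanti (Set.left_mem_Icc.2 one_pos.le) (Set.right_mem_Icc.2 one_pos.le) one_pos.le
  simp only [hφ, one_smul, zero_smul, add_zero, one_pow, mul_one, zero_pow, mul_zero,
    zero_mul, sub_zero, one_mul] at h01
  linarith [h01]

/-- The safety-biased coefficient `μ*` from the SB-TRPO update:
`μ* := (⟨g_c,δ_r⟩ + ε)/(⟨g_c,δ_r⟩ − ⟨g_c,δ_c⟩)` if
`⟨g_c,δ_c⟩ ≠ ⟨g_c,δ_r⟩` and `⟨g_c,δ_r⟩ ≥ −ε`, and `μ* := 0` otherwise. -/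
noncomputable def mustar {d : ℕ} (gc δr δc : EuclideanSpace ℝ (Fin d)) (ε : ℝ) : ℝ :=
  if ⟪gc, δc⟫ ≠ ⟪gc, δr⟫ ∧ ⟪gc, δr⟫ ≥ -ε then
    (⟪gc, δr⟫ + ε) / (⟪gc, δr⟫ - ⟪gc, δc⟫)
  else 0

/-- Key properties of `μ*`: it lies in `[0,1]` and the convex combination of the
inner products is at most `β ⟪gc, δc⟫`. -/
lemma mustar_props {d : ℕ} (gc δr δc : EuclideanSpace ℝ (Fin d)) (β : ℝ) (hβ1 : β ≤ 1)
    (h1 : ⟪gc, δc⟫ ≤ 0) (h2 : ⟪gc, δc⟫ ≤ ⟪gc, δr⟫) :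
    0 ≤ mustar gc δr δc (-β * ⟪gc, δc⟫) ∧ mustar gc δr δc (-β * ⟪gc, δc⟫) ≤ 1 ∧
    (1 - mustar gc δr δc (-β * ⟪gc, δc⟫)) * ⟪gc, δr⟫
      + mustar gc δr δc (-β * ⟪gc, δc⟫) * ⟪gc, δc⟫ ≤ β * ⟪gc, δc⟫ := by
  set μ := mustar gc δr δc (-β * ⟪gc, δc⟫) with hμ
  rw [mustar] at hμ
  by_cases hc : ⟪gc, δc⟫ ≠ ⟪gc, δr⟫ ∧ ⟪gc, δr⟫ ≥ -(-β * ⟪gc, δc⟫)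
  · rw [if_pos hc] at hμ
    have hden : 0 < ⟪gc, δr⟫ - ⟪gc, δc⟫ :=
      lt_of_le_of_ne (by linarith) (sub_ne_zero.2 (Ne.symm hc.1)).symm
    have hnum : 0 ≤ ⟪gc, δr⟫ + -β * ⟪gc, δc⟫ := by linarith [hc.2]
    have hnum2 : ⟪gc, δr⟫ + -β * ⟪gc, δc⟫ ≤ ⟪gc, δr⟫ - ⟪gc, δc⟫ := by nlinarith
    have hμ0 : 0 ≤ μ := by rw [hμ]; positivity
    have hμ1 : μ ≤ 1 := by rw [hμ]; exact div_le_one_of_le₀ hnum2 hden.le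
    refine ⟨hμ0, hμ1, ?_⟩
    have : μ * (⟪gc, δr⟫ - ⟪gc, δc⟫) = ⟪gc, δr⟫ + -β * ⟪gc, δc⟫ := by
      rw [hμ, div_mul_cancel₀ _ hden.ne']
    nlinarith [this]
  · rw [if_neg hc] at hμ
    refine ⟨le_of_eq hμ.symm, by rw [hμ]; norm_num, ?_⟩
    rw [hμ]
    simp only [sub_zero, one_mul, zero_mul, add_zero]
    push_neg at hc
    by_cases he : ⟪gc, δc⟫ = ⟪gc, δr⟫
    · rw [← he]; nlinarith
    · have := hc he
      linarith

/-- Descent lemma for the cost along the SB-TRPO direction: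
if `∇J_c` is `L`-Lipschitz on the closed ball of radius `M` around `θ`,
`‖δ_r‖, ‖δ_c‖ ≤ M`, `⟨g_c,δ_c⟩ ≤ 0` and `⟨g_c,δ_c⟩ ≤ ⟨g_c,δ_r⟩`, then for all
`α ∈ [0,1]`: `J_c(θ + αδ) ≤ J_c(θ) + αβ⟨g_c,δ_c⟩ + (Lα²/2)‖δ‖²`. -/
theorem stmt7 {d : ℕ} (θ δr δc : EuclideanSpace ℝ (Fin d)) (M L : ℝ)
    (hM : 0 < M) (hL : 0 < L) (hδr : ‖δr‖ ≤ M) (hδc : ‖δc‖ ≤ M)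
    (Jc : EuclideanSpace ℝ (Fin d) → ℝ) (hJc : Differentiable ℝ Jc)
    (gc : EuclideanSpace ℝ (Fin d)) (hgc : gradient Jc θ = gc)
    (hLip : LipschitzOnWith (Real.toNNReal L) (gradient Jc) (Metric.closedBall θ M))
    (β : ℝ) (hβ0 : 0 < β) (hβ1 : β ≤ 1)
    (h1 : ⟪gc, δc⟫ ≤ 0) (h2 : ⟪gc, δc⟫ ≤ ⟪gc, δr⟫)
    (δ : EuclideanSpace ℝ (Fin d))
    (hδ : δ = (1 - mustar gc δr δc (-β * ⟪gc, δc⟫)) • δr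
            + mustar gc δr δc (-β * ⟪gc, δc⟫) • δc) :
    ∀ α ∈ Set.Icc (0:ℝ) 1,
      Jc (θ + α • δ) ≤ Jc θ + α * β * ⟪gc, δc⟫ + (L * α ^ 2 / 2) * ‖δ‖ ^ 2 := by
  obtain ⟨hμ0, hμ1, hkey⟩ := mustar_props gc δr δc β hβ1 h1 h2
  set μ := mustar gc δr δc (-β * ⟪gc, δc⟫) with hμdef
  have hδnorm : ‖δ‖ ≤ M := by
    rw [hδ]
    calc ‖(1 - μ) • δr + μ • δc‖ ≤ ‖(1 - μ) • δr‖ + ‖μ • δc‖ := norm_add_le _ _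
      _ = (1 - μ) * ‖δr‖ + μ * ‖δc‖ := by
          rw [norm_smul, norm_smul, Real.norm_eq_abs, Real.norm_eq_abs,
            abs_of_nonneg (by linarith), abs_of_nonneg hμ0]
      _ ≤ (1 - μ) * M + μ * M := by
          gcongr  <;> linarith
      _ = M := by ring
  have hinner : ⟪gc, δ⟫ ≤ β * ⟪gc, δc⟫ := by
    rw [hδ, inner_add_right, real_inner_smul_right, real_inner_smul_right]
    exact hkey
  intro α hα
  obtain ⟨hα0, hα1⟩ := hα
  have hv : ‖α • δ‖ ≤ M := by
    rw [norm_smul, Real.norm_eq_abs, abs_of_nonneg hα0]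
    calc α * ‖δ‖ ≤ 1 * ‖δ‖ := mul_le_mul_of_nonneg_right hα1 (norm_nonneg δ)
      _ ≤ M := by simpa using hδnorm
  have hmain := descent_aux θ M L hL hM.le Jc hJc hLip (α • δ) hv
  rw [hgc] at hmain
  have h5 : ⟪gc, α • δ⟫ = α * ⟪gc, δ⟫ := real_inner_smul_right _ _ _
  have h6 : ‖α • δ‖ ^ 2 = α ^ 2 * ‖δ‖ ^ 2 := by
    rw [norm_smul, Real.norm_eq_abs, mul_pow, sq_abs]
  rw [h5, h6] at hmain
  have h7 : α * ⟪gc, δ⟫ ≤ α * (β * ⟪gc, δc⟫) := mul_le_mul_of_nonneg_left hinner hα0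
  calc Jc (θ + α • δ) ≤ Jc θ + α * ⟪gc, δ⟫ + L / 2 * (α ^ 2 * ‖δ‖ ^ 2) := hmain
    _ ≤ Jc θ + α * β * ⟪gc, δc⟫ + (L * α ^ 2 / 2) * ‖δ‖ ^ 2 := by
        rw [mul_assoc α β]
        have : L / 2 * (α ^ 2 * ‖δ‖ ^ 2) = (L * α ^ 2 / 2) * ‖δ‖ ^ 2 := by ring
        linarith [h7, this.le]
end

section
/- Let F be a symmetric positive definite real d×d matrix, ε_KL > 0, θ ∈ ℝ^d, β ∈ (0,1], and let J_c : ℝ^d → ℝ be differentiable with gradient g_c := ∇J_c(θ) ≠ 0 at θ and with ∇J_c Lipschitz on the closed ball of radius M := max(‖δ_r‖, ‖δ_c‖) centred at θ. Suppose δ_r ∈ T and δ_c ∈ T minimizes δ ↦ ⟨g_c, δ⟩ over T; set ε := −β·⟨g_c, δ_c⟩ and δ := (1−μ*)·δ_r + μ*·δ_c. Then there exists α ∈ (0,1] with J_c(θ + α·δ) < J_c(θ). -/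
open RealInnerProductSpace

lemma sbkey (r c e : ℝ) (hD : r - c ≠ 0) :
    (1 - (r + e) / (r - c)) * r + (r + e) / (r - c) * c = -e := by
  field_simp
  ring

set_option maxHeartbeats 1000000 in
/-- cost part of the Performance Improvement theorem: with `F`
symmetric positive definite, `ε_KL > 0`, `g_c := ∇J_c(θ) ≠ 0`, `∇J_c`
Lipschitz on the closed ball of radius `M := max(‖δ_r‖,‖δ_c‖)` around `θ`,
`δ_r ∈ T`, `δ_c` a minimizer of `⟨g_c,·⟩` over `T`, `ε := −β⟨g_c,δ_c⟩` and
`δ := (1−μ*)δ_r + μ*δ_c`, there exists `α ∈ (0,1]` with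
`J_c(θ + αδ) < J_c(θ)`. -/
theorem stmt10 {d : ℕ} (F : Matrix (Fin d) (Fin d) ℝ) (hF : F.PosDef)
    (εKL : ℝ) (hεKL : 0 < εKL) (θ : EuclideanSpace ℝ (Fin d))
    (β : ℝ) (hβ0 : 0 < β) (hβ1 : β ≤ 1)
    (Jc : EuclideanSpace ℝ (Fin d) → ℝ) (hJc : Differentiable ℝ Jc)
    (gc : EuclideanSpace ℝ (Fin d)) (hgc : gradient Jc θ = gc) (hgc0 : gc ≠ 0)
    (δr δc : EuclideanSpace ℝ (Fin d)) (L : NNReal)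
    (hLip : LipschitzOnWith L (gradient Jc) (Metric.closedBall θ (max ‖δr‖ ‖δc‖)))
    (hδr : (1/2) * ⟪δr, Matrix.toEuclideanLin F δr⟫ ≤ εKL)
    (hδc : (1/2) * ⟪δc, Matrix.toEuclideanLin F δc⟫ ≤ εKL)
    (hmin : ∀ δ : EuclideanSpace ℝ (Fin d),
      (1/2) * ⟪δ, Matrix.toEuclideanLin F δ⟫ ≤ εKL → ⟪gc, δc⟫ ≤ ⟪gc, δ⟫)
    (δ : EuclideanSpace ℝ (Fin d))
    (hδ : δ = (1 - mustar gc δr δc (-β * ⟪gc, δc⟫)) • δr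
            + mustar gc δr δc (-β * ⟪gc, δc⟫) • δc) :
    ∃ α ∈ Set.Ioc (0:ℝ) 1, Jc (θ + α • δ) < Jc θ := by
  -- Step 1: ⟪gc, δc⟫ < 0
  have hc : 0 < ⟪gc, Matrix.toEuclideanLin F gc⟫ := by
    have h := hF.dotProduct_mulVec_pos (x := WithLp.equiv 2 _ gc) (by simpa using hgc0)
    simpa [EuclideanSpace.inner_eq_star_dotProduct, Matrix.toEuclideanLin_apply,
      dotProduct, mul_comm] using h
  set c := ⟪gc, Matrix.toEuclideanLin F gc⟫ with hcdef
  set t : ℝ := Real.sqrt (2 * εKL / c) with htdef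
  have ht0 : 0 < t := Real.sqrt_pos.mpr (by positivity)
  have htsq : t ^ 2 = 2 * εKL / c := Real.sq_sqrt (by positivity)
  have hmem : (1/2) * ⟪(-t) • gc, Matrix.toEuclideanLin F ((-t) • gc)⟫ ≤ εKL := by
    rw [map_smul, real_inner_smul_left, real_inner_smul_right]
    have : (1/2) * ((-t) * ((-t) * c)) = (1/2) * (t^2 * c) := by ring
    rw [this, htsq]
    field_simp
    norm_num
  have hgcnorm : 0 < ⟪gc, gc⟫ := by
    rw [real_inner_self_eq_norm_sq]
    have := norm_pos_iff.mpr hgc0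
    positivity
  have hδcneg : ⟪gc, δc⟫ < 0 := by
    have := hmin _ hmem
    rw [real_inner_smul_right] at this
    nlinarith
  -- Step 2: ⟪gc, δ⟫ < 0
  have hrc : ⟪gc, δc⟫ ≤ ⟪gc, δr⟫ := hmin δr hδr
  set ε : ℝ := -β * ⟪gc, δc⟫ with hεdef
  have hgδ : ⟪gc, δ⟫ < 0 := by
    rw [hδ, inner_add_right, real_inner_smul_right, real_inner_smul_right]
    unfold mustar
    by_cases h : ⟪gc, δc⟫ ≠ ⟪gc, δr⟫ ∧ ⟪gc, δr⟫ ≥ -ε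
    · rw [if_pos h]
      have hD : 0 < ⟪gc, δr⟫ - ⟪gc, δc⟫ := sub_pos.mpr (lt_of_le_of_ne hrc h.1)
      have hεpos : 0 < ε := by rw [hεdef]; nlinarith
      rw [sbkey _ _ _ hD.ne']
      linarith
    · rw [if_neg h]
      push_neg at h
      by_cases he : ⟪gc, δc⟫ = ⟪gc, δr⟫
      · nlinarith [he ▸ hδcneg]
      · have := h he
        have hεpos : 0 < ε := by rw [hεdef]; nlinarith
        nlinarith
  -- Step 3: derivative argument
  have hgrad : HasGradientAt Jc gc θ := hgc ▸ (hJc θ).hasGradientAt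
  have hF' : HasFDerivAt Jc (InnerProductSpace.toDual ℝ _ gc) (θ + (0:ℝ) • δ) := by
    simpa using hgrad.hasFDerivAt
  have hline : HasDerivAt (fun t : ℝ => θ + t • δ) δ 0 := by
    simpa using ((hasDerivAt_id (0:ℝ)).smul_const δ).const_add θ
  have hD : HasDerivAt (fun t : ℝ => Jc (θ + t • δ)) ⟪gc, δ⟫ 0 := by
    have := hF'.comp_hasDerivAt (x := (0:ℝ)) hline
    have h2 : HasDerivAt (Jc ∘ fun t : ℝ => θ + t • δ) ⟪gc, δ⟫ 0 := by
      simpa [InnerProductSpace.toDual_apply_apply] using this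
    exact h2
  have hslope := hasDerivAt_iff_tendsto_slope.mp hD
  have hev : ∀ᶠ s in nhdsWithin 0 (Set.Ioi (0:ℝ)),
      slope (fun s : ℝ => Jc (θ + s • δ)) 0 s < 0 :=
    (hslope.eventually (Iio_mem_nhds hgδ)).filter_mono
      (nhdsWithin_mono _ (fun x hx => Set.mem_Ioi.mp hx |>.ne'))
  have hIoc : ∀ᶠ s in nhdsWithin 0 (Set.Ioi (0:ℝ)), s ∈ Set.Ioc (0:ℝ) 1 :=
    Ioc_mem_nhdsGT (by norm_num)
  obtain ⟨α, hα1, hα2⟩ := (hev.and hIoc).exists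
  refine ⟨α, hα2, ?_⟩
  rw [slope_def_field] at hα1
  have hαpos : 0 < α := hα2.1
  have h0 : (Jc (θ + α • δ) - Jc θ) / α < 0 := by simpa using hα1
  nlinarith [(div_neg_iff.mp h0).resolve_left (fun ⟨_, h⟩ => absurd h (not_lt.mpr hαpos.le))]
end

section
/- Let F be a symmetric positive definite real d×d matrix, ε_KL > 0, θ ∈ ℝ^d, and β ∈ (0,1). Let J_r, J_c : ℝ^d → ℝ be differentiable with gradients g_r := ∇J_r(θ) and g_c := ∇J_c(θ) at θ, both gradients Lipschitz on the closed ball of radius M := max(‖δ_r‖, ‖δ_c‖) centred at θ. Suppose δ_r ∈ T maximizes δ ↦ ⟨g_r, δ⟩ over T, δ_c ∈ T minimizes δ ↦ ⟨g_c, δ⟩ over T, g_r ≠ 0, g_c ≠ 0, and ⟨g_r, δ_c⟩ ≥ 0. Set ε := −β·⟨g_c, δ_c⟩ and δ := (1−μ*)·δ_r + μ*·δ_c. Then there exists α ∈ (0,1] such that simultaneously J_c(θ + α·δ) < J_c(θ) and J_r(θ + α·δ) > J_r(θ). -/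
open RealInnerProductSpace

section Aux

open Filter

private lemma quad_pos' {d : ℕ} (F : Matrix (Fin d) (Fin d) ℝ) (hF : F.PosDef)
    (v : EuclideanSpace ℝ (Fin d)) (hv : v ≠ 0) :
    0 < ⟪v, Matrix.toEuclideanLin F v⟫ := by
  have h := hF.dotProduct_mulVec_pos (x := WithLp.equiv 2 _ v) (by simpa using hv)
  simpa [PiLp.inner_apply, Matrix.toEuclideanLin_apply, dotProduct, mul_comm]
    using h

private lemma dir_deriv' {d : ℕ} (J : EuclideanSpace ℝ (Fin d) → ℝ)
    (hJ : Differentiable ℝ J) (θ v : EuclideanSpace ℝ (Fin d)) :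
    HasDerivAt (fun t : ℝ => J (θ + t • v)) ⟪gradient J θ, v⟫ 0 := by
  have hgrad : HasGradientAt J (gradient J θ) θ := (hJ θ).hasGradientAt
  have hfd : HasFDerivAt J (InnerProductSpace.toDual ℝ _ (gradient J θ)) θ :=
    hgrad.hasFDerivAt
  have hline : HasDerivAt (fun t : ℝ => θ + t • v) v 0 := by
    simpa using ((hasDerivAt_id (0:ℝ)).smul_const v).const_add θ
  have hfd' : HasFDerivAt J (InnerProductSpace.toDual ℝ _ (gradient J θ)) (θ + (0:ℝ) • v) := by
    simpa using hfd
  have := hfd'.comp_hasDerivAt 0 hline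
  simpa [Function.comp_def] using this

private lemma pos_dir' {d : ℕ} (J : EuclideanSpace ℝ (Fin d) → ℝ)
    (hJ : Differentiable ℝ J) (θ v : EuclideanSpace ℝ (Fin d))
    (h : 0 < ⟪gradient J θ, v⟫) :
    ∀ᶠ t in nhdsWithin (0:ℝ) (Set.Ioi 0), J θ < J (θ + t • v) := by
  have hcomp := dir_deriv' J hJ θ v
  have hslope := hasDerivAt_iff_tendsto_slope.1 hcomp
  have hslope' : Tendsto (slope (fun t : ℝ => J (θ + t • v)) 0)
      (nhdsWithin (0:ℝ) (Set.Ioi 0)) (nhds ⟪gradient J θ, v⟫) :=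
    hslope.mono_left (nhdsWithin_mono _ (fun x hx => ne_of_gt hx))
  have hev : ∀ᶠ t in nhdsWithin (0:ℝ) (Set.Ioi 0),
      0 < slope (fun t : ℝ => J (θ + t • v)) 0 t :=
    hslope' (Ioi_mem_nhds h)
  filter_upwards [hev, self_mem_nhdsWithin] with t ht ht0
  have ht0' : (0:ℝ) < t := ht0
  have h2 : 0 < t⁻¹ * (J (θ + t • v) - J θ) := by
    simpa [slope_def_field, slope, sub_zero] using ht
  have h3 := mul_pos ht0' h2
  rw [← mul_assoc, mul_inv_cancel₀ (ne_of_gt ht0'), one_mul] at h3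
  linarith

private lemma neg_dir' {d : ℕ} (J : EuclideanSpace ℝ (Fin d) → ℝ)
    (hJ : Differentiable ℝ J) (θ v : EuclideanSpace ℝ (Fin d))
    (h : ⟪gradient J θ, v⟫ < 0) :
    ∀ᶠ t in nhdsWithin (0:ℝ) (Set.Ioi 0), J (θ + t • v) < J θ := by
  have hcomp := dir_deriv' J hJ θ v
  have hslope := hasDerivAt_iff_tendsto_slope.1 hcomp
  have hslope' : Tendsto (slope (fun t : ℝ => J (θ + t • v)) 0)
      (nhdsWithin (0:ℝ) (Set.Ioi 0)) (nhds ⟪gradient J θ, v⟫) :=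
    hslope.mono_left (nhdsWithin_mono _ (fun x hx => ne_of_gt hx))
  have hev : ∀ᶠ t in nhdsWithin (0:ℝ) (Set.Ioi 0),
      slope (fun t : ℝ => J (θ + t • v)) 0 t < 0 :=
    hslope' (Iio_mem_nhds h)
  filter_upwards [hev, self_mem_nhdsWithin] with t ht ht0
  have ht0' : (0:ℝ) < t := ht0
  have h2 : t⁻¹ * (J (θ + t • v) - J θ) < 0 := by
    simpa [slope_def_field, slope, sub_zero] using ht
  have h3 := mul_neg_of_pos_of_neg ht0' h2
  rw [← mul_assoc, mul_inv_cancel₀ (ne_of_gt ht0'), one_mul] at h3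
  linarith

end Aux

set_option maxHeartbeats 1000000

/-- simultaneous improvement: with `F` symmetric positive
definite, `ε_KL > 0`, `β ∈ (0,1)`, `g_r := ∇J_r(θ) ≠ 0`, `g_c := ∇J_c(θ) ≠ 0`,
both gradients Lipschitz on the closed ball of radius `M := max(‖δ_r‖,‖δ_c‖)`
around `θ`, `δ_r` maximizing `⟨g_r,·⟩` over `T`, `δ_c` minimizing `⟨g_c,·⟩`
over `T`, `⟨g_r,δ_c⟩ ≥ 0`, `ε := −β⟨g_c,δ_c⟩` and `δ := (1−μ*)δ_r + μ*δ_c`,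
there exists `α ∈ (0,1]` with both `J_c(θ + αδ) < J_c(θ)` and
`J_r(θ + αδ) > J_r(θ)`. -/
theorem stmt12 {d : ℕ} (F : Matrix (Fin d) (Fin d) ℝ) (hF : F.PosDef)
    (εKL : ℝ) (hεKL : 0 < εKL) (θ : EuclideanSpace ℝ (Fin d))
    (β : ℝ) (hβ0 : 0 < β) (hβ1 : β < 1)
    (Jr Jc : EuclideanSpace ℝ (Fin d) → ℝ)
    (hJr : Differentiable ℝ Jr) (hJc : Differentiable ℝ Jc)
    (gr gc : EuclideanSpace ℝ (Fin d))
    (hgr : gradient Jr θ = gr) (hgc : gradient Jc θ = gc)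
    (hgr0 : gr ≠ 0) (hgc0 : gc ≠ 0)
    (δr δc : EuclideanSpace ℝ (Fin d)) (Lr Lc : NNReal)
    (hLipr : LipschitzOnWith Lr (gradient Jr) (Metric.closedBall θ (max ‖δr‖ ‖δc‖)))
    (hLipc : LipschitzOnWith Lc (gradient Jc) (Metric.closedBall θ (max ‖δr‖ ‖δc‖)))
    (hδr : (1/2) * ⟪δr, Matrix.toEuclideanLin F δr⟫ ≤ εKL)
    (hmax : ∀ δ : EuclideanSpace ℝ (Fin d),
      (1/2) * ⟪δ, Matrix.toEuclideanLin F δ⟫ ≤ εKL → ⟪gr, δ⟫ ≤ ⟪gr, δr⟫)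
    (hδc : (1/2) * ⟪δc, Matrix.toEuclideanLin F δc⟫ ≤ εKL)
    (hmin : ∀ δ : EuclideanSpace ℝ (Fin d),
      (1/2) * ⟪δ, Matrix.toEuclideanLin F δ⟫ ≤ εKL → ⟪gc, δc⟫ ≤ ⟪gc, δ⟫)
    (halign : 0 ≤ ⟪gr, δc⟫)
    (δ : EuclideanSpace ℝ (Fin d))
    (hδ : δ = (1 - mustar gc δr δc (-β * ⟪gc, δc⟫)) • δr
            + mustar gc δr δc (-β * ⟪gc, δc⟫) • δc) :
    ∃ α ∈ Set.Ioc (0:ℝ) 1, Jc (θ + α • δ) < Jc θ ∧ Jr θ < Jr (θ + α • δ) := by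
  classical
  -- feasibility of scaled gradients
  have scaled_feas : ∀ v : EuclideanSpace ℝ (Fin d), v ≠ 0 →
      ∃ t : ℝ, 0 < t ∧
        (1/2) * ⟪t • v, Matrix.toEuclideanLin F (t • v)⟫ ≤ εKL ∧
        (1/2) * ⟪(-t) • v, Matrix.toEuclideanLin F ((-t) • v)⟫ ≤ εKL := by
    intro v hv
    have hq : 0 < ⟪v, Matrix.toEuclideanLin F v⟫ := quad_pos' F hF v hv
    set q := ⟪v, Matrix.toEuclideanLin F v⟫ with hqdef
    refine ⟨Real.sqrt (2 * εKL / q), Real.sqrt_pos.2 (by positivity), ?_, ?_⟩ <;>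
    · have hsq : Real.sqrt (2 * εKL / q) ^ 2 = 2 * εKL / q :=
        Real.sq_sqrt (by positivity)
      have : ∀ t : ℝ, (1/2) * ⟪t • v, Matrix.toEuclideanLin F (t • v)⟫
          = (1/2) * (t^2 * q) := by
        intro t
        rw [map_smul, real_inner_smul_left, real_inner_smul_right]
        ring
      rw [this]
      try simp only [neg_sq]
      rw [hsq, div_mul_cancel₀ _ (ne_of_gt hq)]
      linarith
  -- ⟪gr, δr⟫ > 0
  obtain ⟨tr, htr, htrf, _⟩ := scaled_feas gr hgr0
  have hgrδr : 0 < ⟪gr, δr⟫ := by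
    have := hmax (tr • gr) htrf
    rw [real_inner_smul_right] at this
    have hn : 0 < ⟪gr, gr⟫ := by
      rw [real_inner_self_eq_norm_sq]
      exact pow_pos (norm_pos_iff.2 hgr0) 2
    nlinarith
  -- ⟪gc, δc⟫ < 0
  obtain ⟨tc, htc, _, htcf⟩ := scaled_feas gc hgc0
  have hgcδc : ⟪gc, δc⟫ < 0 := by
    have := hmin ((-tc) • gc) htcf
    rw [real_inner_smul_right] at this
    have hn : 0 < ⟪gc, gc⟫ := by
      rw [real_inner_self_eq_norm_sq]
      exact pow_pos (norm_pos_iff.2 hgc0) 2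
    nlinarith
  set a := ⟪gc, δr⟫ with ha
  set b := ⟪gc, δc⟫ with hb
  set ε := -β * b with hε
  have hεpos : 0 < ε := by rw [hε]; nlinarith
  have hbε : b < -ε := by rw [hε]; nlinarith
  set μ := mustar gc δr δc ε with hμdef
  have hinner_c : ⟪gc, δ⟫ = (1 - μ) * a + μ * b := by
    rw [hδ, inner_add_right, real_inner_smul_right, real_inner_smul_right]
  have hinner_r : ⟪gr, δ⟫ = (1 - μ) * ⟪gr, δr⟫ + μ * ⟪gr, δc⟫ := by
    rw [hδ, inner_add_right, real_inner_smul_right, real_inner_smul_right]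
  have hμfacts : (0 ≤ μ ∧ μ < 1) ∧ (1 - μ) * a + μ * b < 0 := by
    by_cases hcond : b ≠ a ∧ a ≥ -ε
    · have hμ : μ = (a + ε) / (a - b) := by
        rw [hμdef, mustar, if_pos hcond]
      have hge : a ≥ -ε := hcond.2
      have hab : (0:ℝ) < a - b := by linarith [hbε]
      have hμ0 : 0 ≤ μ := by
        rw [hμ]; apply div_nonneg _ (le_of_lt hab); linarith
      have hμ1 : μ < 1 := by
        rw [hμ, div_lt_one hab]; linarith [hbε]
      have hmul : μ * (a - b) = a + ε := by
        rw [hμ, div_mul_cancel₀ _ (ne_of_gt hab)]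
      refine ⟨⟨hμ0, hμ1⟩, ?_⟩
      nlinarith [hmul, hεpos]
    · have hμ : μ = 0 := by
        rw [hμdef, mustar, if_neg hcond]
      push_neg at hcond
      have ha_neg : a < 0 := by
        by_cases hba : b = a
        · rw [← hba]; exact hgcδc
        · have := hcond hba
          linarith [hεpos]
      refine ⟨⟨le_of_eq hμ.symm, by rw [hμ]; exact zero_lt_one⟩, ?_⟩
      rw [hμ]; simpa using ha_neg
  obtain ⟨⟨hμ0, hμ1⟩, hcval⟩ := hμfacts
  have hc_neg : ⟪gc, δ⟫ < 0 := by rw [hinner_c]; exact hcval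
  have hr_pos : 0 < ⟪gr, δ⟫ := by
    rw [hinner_r]
    nlinarith [mul_nonneg hμ0 halign]
  -- conclude via directional derivatives
  have hcn : ⟪gradient Jc θ, δ⟫ < 0 := by rw [hgc]; exact hc_neg
  have hrp : 0 < ⟪gradient Jr θ, δ⟫ := by rw [hgr]; exact hr_pos
  have h1 := neg_dir' Jc hJc θ δ hcn
  have h2 := pos_dir' Jr hJr θ δ hrp
  have h3 : Set.Ioc (0:ℝ) 1 ∈ nhdsWithin (0:ℝ) (Set.Ioi 0) :=
    Ioc_mem_nhdsGT_of_mem ⟨le_refl 0, zero_lt_one⟩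
  have : ∀ᶠ t in nhdsWithin (0:ℝ) (Set.Ioi 0),
      t ∈ Set.Ioc (0:ℝ) 1 ∧ Jc (θ + t • δ) < Jc θ ∧ Jr θ < Jr (θ + t • δ) := by
    filter_upwards [h1, h2, h3] with t ht1 ht2 ht3
    exact ⟨ht3, ht1, ht2⟩
  obtain ⟨α, hα1, hα2, hα3⟩ := this.exists
  exact ⟨α, hα1, hα2, hα3⟩
end
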